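/- Let $Q(\vec x, \vec y) = \sum_{h=0}^{n-1}\sum_{j=0}^{n-1-h} \frac{2^{h+j}}{2^{n-1}} \pi x_h y_j$ be the quadratic form of the expansion of the Fourier transform over $\mathbb{Z}_{2^n}$, on variable set $V = \{x_0,\ldots,x_{n-1}\} \cup \{y_0,\ldots,y_{n-1}\}$ with $I = \{x_0,\ldots,x_{n-1}\}$ and $O = \{y_0,\ldots,y_{n-1}\}$, and let $(G, I, O)$ be the induced geometry: $G$ is bipartite with an edge $x_h y_j$ of weight $2^{h+j}/2^{n-1}$ whenever $h + j \leq n-1$. Then the function $f(x_h) = y_{n-1-h}$, together with the partial order generated by $x_h \prec y_j$ for all $j \geq n-1-h$ and $x_h \prec x_{h'}$ for $h' < h$ appropriately extended, is a fractional-edge flow for $(G, I, O)$: $f$ is a flow, and the unique unit-weight edges are exactly the edges $x_h f(x_h) = x_h y_{n-1-h}$. -/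

import Mathlib

/-- The vertex set of the geometry of the QFT quadratic form expansion: input vertices
`x_h` (`Sum.inl h`) and output vertices `y_j` (`Sum.inr j`). -/
def qftV (n : ℕ) : Type := Fin n ⊕ Fin n

/-- The edge weights of the induced geometry: `W(x_h, y_j) = 2^{h+j}/2^{n-1}` when
`h + j ≤ n - 1`, and `0` otherwise (no edges within the `x`'s or within the `y`'s). -/
noncomputable def qftW (n : ℕ) : qftV n → qftV n → ℝ
  | Sum.inl h, Sum.inr j =>
      if h.val + j.val ≤ n - 1 then (2 : ℝ) ^ (h.val + j.val) / 2 ^ (n - 1) else 0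
  | Sum.inr j, Sum.inl h =>
      if h.val + j.val ≤ n - 1 then (2 : ℝ) ^ (h.val + j.val) / 2 ^ (n - 1) else 0
  | _, _ => 0

/-- Adjacency in the induced geometry: nonzero weight. -/
noncomputable def qftAdj (n : ℕ) (u v : qftV n) : Prop := qftW n u v ≠ 0

/-- The flow function `f(x_h) = y_{n-1-h}` (extended arbitrarily on the outputs). -/
def qftf (n : ℕ) (hn : 0 < n) : qftV n → qftV n
  | Sum.inl h => Sum.inr ⟨n - 1 - h.val, by omega⟩
  | Sum.inr j => Sum.inr j

lemma qft_pow_div_ne_zero (a b : ℕ) : (2 : ℝ) ^ a / 2 ^ b ≠ 0 := by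
  positivity

lemma qft_pow_div_eq_one_iff (a b : ℕ) : (2 : ℝ) ^ a / 2 ^ b = 1 ↔ a = b := by
  rw [div_eq_one_iff_eq (by positivity)]
  constructor
  · intro h
    have : ((2 ^ a : ℕ) : ℝ) = ((2 ^ b : ℕ) : ℝ) := by push_cast; exact h
    exact Nat.pow_right_injective (le_refl 2) (Nat.cast_inj.mp this)
  · rintro rfl; rfl

/-- Rank function used to build the partial order. -/
def qftRank (n : ℕ) : qftV n → ℕ
  | Sum.inl h => n - h.val
  | Sum.inr j => 2 * n + j.val

/-- The QFT geometry has a fractional-edge flow: there is a partial order `r` containing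
the generators `x_h ≺ y_j` for `j ≥ n-1-h` and `x_h ≺ x_{h'}` for `h' < h`, such that
`(f, r)` with `f(x_h) = y_{n-1-h}` is a flow; moreover every fractional-weight edge `ab`
satisfies `f(a) ≠ b` and `f(b) ≠ a`, and the unit-weight edges are exactly the edges
`x_h f(x_h) = x_h y_{n-1-h}`. -/
theorem qft_fractional_edge_flow (n : ℕ) (hn : 0 < n) :
    ∃ r : qftV n → qftV n → Prop, IsPartialOrder (qftV n) r ∧
      (∀ h j : Fin n, n - 1 - h.val ≤ j.val → r (Sum.inl h) (Sum.inr j)) ∧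
      (∀ h h' : Fin n, h'.val < h.val → r (Sum.inl h) (Sum.inl h')) ∧
      (∀ h : Fin n,
        (∀ h' : Fin n, qftf n hn (Sum.inl h) ≠ Sum.inl h') ∧
        qftAdj n (Sum.inl h) (qftf n hn (Sum.inl h)) ∧
        (r (Sum.inl h) (qftf n hn (Sum.inl h)) ∧
          (Sum.inl h : qftV n) ≠ qftf n hn (Sum.inl h)) ∧
        (∀ v, qftAdj n (qftf n hn (Sum.inl h)) v → v ≠ Sum.inl h →
          r (Sum.inl h) v ∧ (Sum.inl h : qftV n) ≠ v)) ∧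
      (∀ u v, qftAdj n u v → qftW n u v < 1 →
        (∀ h : Fin n, u = Sum.inl h → qftf n hn u ≠ v) ∧
        (∀ h : Fin n, v = Sum.inl h → qftf n hn v ≠ u)) ∧
      (∀ h j : Fin n,
        qftW n (Sum.inl h) (Sum.inr j) = 1 ↔
          (Sum.inr j : qftV n) = qftf n hn (Sum.inl h)) := by
  refine ⟨fun u v => u = v ∨ qftRank n u < qftRank n v, ?_, ?_, ?_, ?_, ?_, ?_⟩
  · exact { refl := fun a => Or.inl rfl
            trans := by
              rintro a b c (rfl | hab) (rfl | hbc)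
              · exact Or.inl rfl
              · exact Or.inr hbc
              · exact Or.inr hab
              · exact Or.inr (hab.trans hbc)
            antisymm := by
              intro a b hab hba
              rcases hab with rfl | hab
              · rfl
              rcases hba with rfl | hba
              · rfl
              exact absurd hba (not_lt.mpr hab.le) }
  · intro h j _
    exact Or.inr (by simp [qftRank]; omega)
  · intro h h' hlt
    refine Or.inr ?_
    simp only [qftRank]
    omega
  · intro h
    have hkey : h.val + (n - 1 - h.val) = n - 1 := by omega
    refine ⟨?_, ?_, ⟨?_, ?_⟩, ?_⟩
    · intro h'; simp [qftf]; exact Sum.inr_ne_inl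
    · simp only [qftf, qftAdj, qftW, hkey, if_pos (le_refl (n - 1))]
      exact qft_pow_div_ne_zero _ _
    · exact Or.inr (by simp [qftf, qftRank]; omega)
    · simp [qftf]
    · intro v hadj hne
      match v with
      | Sum.inl h' =>
        have : h'.val + (n - 1 - h.val) ≤ n - 1 := by
          by_contra hc
          simp only [qftf, qftAdj, qftW, if_neg hc] at hadj
          exact hadj rfl
        have hne' : h'.val ≠ h.val := fun he => hne (by
          congr 1; exact Fin.ext he)
        refine ⟨Or.inr ?_, ?_⟩
        · simp only [qftRank]; omega
        · intro he; cases he; omega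
      | Sum.inr j' =>
        exact absurd (show qftW n (qftf n hn (Sum.inl h)) (Sum.inr j') = 0 by
          simp [qftf, qftW]) hadj
  · intro u v hadj hlt
    constructor
    · rintro h rfl hfv
      subst hfv
      simp only [qftf, qftW, show h.val + (n - 1 - h.val) = n - 1 by omega,
        if_pos (le_refl (n - 1))] at hlt
      rw [div_self (by positivity : (2:ℝ)^(n-1) ≠ 0)] at hlt
      exact lt_irrefl _ hlt
    · rintro h rfl hfv
      match u with
      | Sum.inl h' => simp [qftf] at hfv
      | Sum.inr j' =>
        have hj : j'.val = n - 1 - h.val := by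
          have h2 : (Sum.inr (⟨n - 1 - h.val, by omega⟩ : Fin n) : qftV n) = Sum.inr j' := hfv
          have := Sum.inr.inj h2
          exact (Fin.ext_iff.mp this).symm
        simp only [qftW, hj, show h.val + (n - 1 - h.val) = n - 1 by omega,
          if_pos (le_refl (n - 1))] at hlt
        rw [div_self (by positivity : (2:ℝ)^(n-1) ≠ 0)] at hlt
        exact lt_irrefl _ hlt
  · intro h j
    simp only [qftf, qftW]
    constructor
    · intro hw
      split_ifs at hw with hc
      · rw [qft_pow_div_eq_one_iff] at hw
        simp only [Sum.inr.injEq, Fin.ext_iff]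
        omega
      · exact absurd hw (by norm_num)
    · intro he
      have : j.val = n - 1 - h.val := by
        simpa [Sum.inr.injEq, Fin.ext_iff] using he
      rw [this, show h.val + (n - 1 - h.val) = n - 1 by omega, if_pos (le_refl (n - 1))]
      exact div_self (by positivity)
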